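/- Let κ ≥ 3, let ε, α₀, α₁, β, γ₀, …, γ_{κ-1} be real constants with β ≠ 0 and α₁ - ε α₀ ≠ 0, and define the map h(x,u) = ((α₀ + α₁x)/(1 + εx), (βu + γ₀ + γ₁x + ⋯ + γ_{κ-1}x^{κ-1})/(1 + εx)^{κ-1}) on the domain where 1 + εx ≠ 0. Then for every polynomial p of degree ≤ κ-1, the image under h of the graph {(x, p(x))} is contained in the graph of another polynomial of degree ≤ κ-1. -/

import Mathlib

open Polynomial

/-- the map `h(x,u) = ((α₀+α₁x)/(1+εx), (βu+γ₀+⋯+γ_{κ-1}x^{κ-1})/(1+εx)^{κ-1})`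
sends graphs of polynomials of degree ≤ κ-1 into graphs of polynomials of degree ≤ κ-1. -/
theorem stmt2 (κ : ℕ) (hκ : 3 ≤ κ) (ε α₀ α₁ β : ℝ) (γ : Fin κ → ℝ)
    (hβ : β ≠ 0) (hα : α₁ - ε * α₀ ≠ 0) :
    ∀ p : Polynomial ℝ, p.natDegree ≤ κ - 1 →
      ∃ q : Polynomial ℝ, q.natDegree ≤ κ - 1 ∧
        ∀ x : ℝ, 1 + ε * x ≠ 0 →
          (β * p.eval x + ∑ l : Fin κ, γ l * x ^ (l : ℕ)) / (1 + ε * x) ^ (κ - 1)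
            = q.eval ((α₀ + α₁ * x) / (1 + ε * x)) := by
  intro p hp
  set m := κ - 1 with hm
  set A := α₁ - ε * α₀ with hA
  set r : Polynomial ℝ := Polynomial.C β * p + ∑ l : Fin κ, Polynomial.C (γ l) * Polynomial.X ^ (l : ℕ) with hr
  have hrdeg : r.natDegree ≤ m := by
    refine le_trans (Polynomial.natDegree_add_le _ _) (max_le ?_ ?_)
    · exact le_trans (Polynomial.natDegree_C_mul_le _ _) hp
    · refine Polynomial.natDegree_sum_le_of_forall_le _ _ (fun l _ => ?_)
      refine le_trans (Polynomial.natDegree_C_mul_le _ _) ?_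
      rw [Polynomial.natDegree_X_pow]
      have := l.isLt
      omega
  refine ⟨Polynomial.C (A ^ m)⁻¹ *
      ∑ j ∈ Finset.range (m + 1), Polynomial.C (r.coeff j) *
        (Polynomial.X - Polynomial.C α₀) ^ j *
        (Polynomial.C α₁ - Polynomial.C ε * Polynomial.X) ^ (m - j), ?_, ?_⟩
  · refine le_trans (Polynomial.natDegree_mul_le) ?_
    rw [Polynomial.natDegree_C, zero_add]
    refine Polynomial.natDegree_sum_le_of_forall_le _ _ (fun j hj => ?_)
    have hjm : j ≤ m := Nat.lt_succ_iff.mp (Finset.mem_range.mp hj)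
    refine le_trans (Polynomial.natDegree_mul_le) ?_
    have h1 : (Polynomial.C (r.coeff j) * (Polynomial.X - Polynomial.C α₀) ^ j).natDegree ≤ j := by
      refine le_trans (Polynomial.natDegree_C_mul_le _ _) ?_
      refine le_trans (Polynomial.natDegree_pow_le) ?_
      rw [Polynomial.natDegree_X_sub_C, mul_one]
    have h2 : ((Polynomial.C α₁ - Polynomial.C ε * Polynomial.X) ^ (m - j)).natDegree ≤ m - j := by
      refine le_trans (Polynomial.natDegree_pow_le) ?_
      have : (Polynomial.C α₁ - Polynomial.C ε * Polynomial.X).natDegree ≤ 1 := by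
        refine le_trans (Polynomial.natDegree_sub_le _ _) (max_le ?_ ?_)
        · simp
        · exact le_trans (Polynomial.natDegree_C_mul_le _ _) (le_of_eq Polynomial.natDegree_X)
      calc (m - j) * (Polynomial.C α₁ - Polynomial.C ε * Polynomial.X).natDegree
          ≤ (m - j) * 1 := Nat.mul_le_mul_left _ this
        _ = m - j := by ring
    omega
  · intro x hx
    have hevr : r.eval x = β * p.eval x + ∑ l : Fin κ, γ l * x ^ (l : ℕ) := by
      simp [hr, Polynomial.eval_finset_sum]
    have hsum : r.eval x = ∑ j ∈ Finset.range (m + 1), r.coeff j * x ^ j :=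
      Polynomial.eval_eq_sum_range' (lt_of_le_of_lt hrdeg (Nat.lt_succ_self m)) x
    have h1 : (α₀ + α₁ * x) / (1 + ε * x) - α₀ = x * (A / (1 + ε * x)) := by
      rw [hA, eq_comm, ← mul_div_assoc, eq_sub_iff_add_eq, div_add' _ _ _ hx]; congr 1; ring
    have h2 : α₁ - ε * ((α₀ + α₁ * x) / (1 + ε * x)) = A / (1 + ε * x) := by
      rw [hA]; field_simp; ring
    simp only [Polynomial.eval_mul, Polynomial.eval_C, Polynomial.eval_finset_sum,
      Polynomial.eval_pow, Polynomial.eval_sub, Polynomial.eval_X]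
    have key : ∀ j ∈ Finset.range (m + 1),
        r.coeff j * ((α₀ + α₁ * x) / (1 + ε * x) - α₀) ^ j *
          (α₁ - ε * ((α₀ + α₁ * x) / (1 + ε * x))) ^ (m - j)
        = r.coeff j * x ^ j * (A / (1 + ε * x)) ^ m := by
      intro j hj
      have hjm : j ≤ m := Nat.lt_succ_iff.mp (Finset.mem_range.mp hj)
      have hadd : j + (m - j) = m := by omega
      rw [h1, h2, mul_pow,
        show (A / (1 + ε * x)) ^ m = (A / (1 + ε * x)) ^ j * (A / (1 + ε * x)) ^ (m - j) from by
          rw [← pow_add, hadd]]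
      ring
    rw [Finset.sum_congr rfl key, ← Finset.sum_mul, ← hsum, hevr]
    have hAm : A ^ m ≠ 0 := pow_ne_zero _ hα
    rw [div_pow]
    field_simp
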